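/- arXiv:2204.05475 — 3 statements merged into one kernel-verified Lean document; each statement's English description precedes it below -/
import Mathlib

section
/- Let G be an infinite graph with maximum degree at most Δ (Δ finite) satisfying the expansion property with polynomial bound L: every finite subset of vertices with at most B escaping edges has cardinality at most L(B). Then for any finite set V' of vertices, the induced subgraph G[V \ V'] satisfies the expansion property with bound L'(B) = L(B + Δ·|V'|): every finite subset W of V \ V' with at most B escaping edges in G[V \ V'] has |W| ≤ L(B + Δ·|V'|). -/
/-- The escaping edges from a vertex set `W` in a graph `G`, recorded as ordered pairs
`(a, b)` with `a ∈ W`, `a` adjacent to `b`, and `b` lying in an infinite connected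
component of the subgraph induced on the complement of `W`. -/
def escaping {V : Type*} (G : SimpleGraph V) (W : Set V) : Set (V × V) :=
  {p | p.1 ∈ W ∧ G.Adj p.1 p.2 ∧ ∃ h : p.2 ∈ Wᶜ,
    {c : ↥(Wᶜ) | (G.induce Wᶜ).Reachable ⟨p.2, h⟩ c}.Infinite}

/-- The expansion property with bound `L`: every finite vertex set with at most `B`
escaping edges has cardinality at most `L B`. -/
def ExpansionProp {V : Type*} (G : SimpleGraph V) (L : ℕ → ℕ) : Prop :=
  ∀ (B : ℕ) (W : Set V), W.Finite → (escaping G W).encard ≤ B → W.ncard ≤ L B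

open Set

lemma edges_from_finite_le {V : Type*} (G : SimpleGraph V) (Δ : ℕ)
    (hΔ : ∀ v : V, (G.neighborSet v).encard ≤ Δ)
    (s : Set V) (hs : s.Finite) :
    {p : V × V | p.1 ∈ s ∧ p.2 ∈ G.neighborSet p.1}.encard ≤ Δ * s.ncard := by
  refine Set.Finite.induction_on (motive := fun s _ =>
      {p : V × V | p.1 ∈ s ∧ p.2 ∈ G.neighborSet p.1}.encard ≤ Δ * s.ncard) s hs (by simp) ?_
  intro a s ha hs ih
  have heq : {p : V × V | p.1 ∈ insert a s ∧ p.2 ∈ G.neighborSet p.1}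
      = ((fun b => (a, b)) '' G.neighborSet a)
        ∪ {p : V × V | p.1 ∈ s ∧ p.2 ∈ G.neighborSet p.1} := by
    ext ⟨x, y⟩
    simp only [Set.mem_setOf_eq, Set.mem_insert_iff, Set.mem_union, Set.mem_image]
    constructor
    · rintro ⟨rfl | hx, hy⟩
      · exact Or.inl ⟨y, hy, rfl⟩
      · exact Or.inr ⟨hx, hy⟩
    · rintro (⟨b, hb, heq⟩ | ⟨hx, hy⟩)
      · cases heq; exact ⟨Or.inl rfl, hb⟩
      · exact ⟨Or.inr hx, hy⟩
  rw [heq, Set.ncard_insert_of_notMem ha hs]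
  calc _ ≤ _ := Set.encard_union_le _ _
    _ ≤ (Δ : ℕ∞) + Δ * s.ncard := by
        exact add_le_add (le_trans (Set.encard_image_le _ _) (hΔ a)) ih
    _ = (Δ : ℕ∞) * ((s.ncard : ℕ∞) + 1) := by ring
    _ = _ := by push_cast; ring_nf

/-- If an infinite graph `G` with maximum degree at most `Δ` satisfies the expansion
property with bound `L`, then for any finite vertex set `V'`, the induced subgraph on the
complement of `V'` satisfies the expansion property with bound `B ↦ L (B + Δ * |V'|)`. -/
theorem expansion_of_removeVertices {V : Type*} (G : SimpleGraph V) (hinf : Infinite V)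
    (Δ : ℕ) (hΔ : ∀ v : V, (G.neighborSet v).encard ≤ Δ)
    (L : ℕ → ℕ) (hL : ExpansionProp G L)
    (V' : Set V) (hV' : V'.Finite)
    (B : ℕ) (W : Set ↥(V'ᶜ)) (hW : W.Finite)
    (hesc : (escaping (G.induce V'ᶜ) W).encard ≤ B) :
    W.ncard ≤ L (B + Δ * V'.ncard) := by
  classical
  set Wv : Set V := Subtype.val '' W with hWv
  set W' : Set V := Wv ∪ V' with hW'def
  have hW'fin : W'.Finite := (hW.image _).union hV'
  -- key inclusion on escaping edges
  have hsub : escaping G W' ⊆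
      ((fun p : ↥(V'ᶜ) × ↥(V'ᶜ) => ((p.1 : V), (p.2 : V))) '' escaping (G.induce V'ᶜ) W)
      ∪ {p : V × V | p.1 ∈ V' ∧ p.2 ∈ G.neighborSet p.1} := by
    rintro ⟨a, b⟩ ⟨haW, hadj, hb, hbinf⟩
    by_cases haV' : a ∈ V'
    · exact Or.inr ⟨haV', hadj⟩
    · left
      have haWv : a ∈ Wv := haW.resolve_right haV'
      have haV'c : a ∈ V'ᶜ := haV'
      have hbV' : b ∈ V'ᶜ := fun h => hb (Or.inr h)
      have hbW : (⟨b, hbV'⟩ : ↥(V'ᶜ)) ∈ Wᶜ := fun hmem => hb (Or.inl ⟨_, hmem, rfl⟩)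
      obtain ⟨a', ha'W, rfl⟩ := haWv
      -- the graph hom from G.induce W'ᶜ to the doubly-induced graph
      let φ : ↥(W'ᶜ) → ↥(Wᶜ : Set ↥(V'ᶜ)) := fun x =>
        ⟨⟨x.1, fun h => x.2 (Or.inr h)⟩, fun h => x.2 (Or.inl ⟨_, h, rfl⟩)⟩
      have φinj : Function.Injective φ := by
        intro x y hxy
        exact Subtype.ext ((congrArg (fun z : ↥(Wᶜ : Set ↥(V'ᶜ)) => (z.1 : V)) hxy))
      have φhom : ∀ x y : ↥(W'ᶜ), (G.induce W'ᶜ).Adj x y →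
          ((G.induce V'ᶜ).induce (Wᶜ : Set ↥(V'ᶜ))).Adj (φ x) (φ y) := by
        intro x y h
        exact h
      let Φ : G.induce W'ᶜ →g (G.induce V'ᶜ).induce (Wᶜ : Set ↥(V'ᶜ)) :=
        ⟨φ, fun h => φhom _ _ h⟩
      refine ⟨(a', ⟨b, hbV'⟩), ⟨ha'W, hadj, hbW, ?_⟩, rfl⟩
      refine Set.Infinite.mono ?_ (hbinf.image φinj.injOn)
      rintro c ⟨d, hd, rfl⟩
      exact (hd.map Φ : _)
  -- cardinality of escaping edges of W'
  have hcard : (escaping G W').encard ≤ (B + Δ * V'.ncard : ℕ) := by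
    calc (escaping G W').encard ≤ _ := Set.encard_le_encard hsub
      _ ≤ ((fun p : ↥(V'ᶜ) × ↥(V'ᶜ) => ((p.1 : V), (p.2 : V))) ''
            escaping (G.induce V'ᶜ) W).encard
          + {p : V × V | p.1 ∈ V' ∧ p.2 ∈ G.neighborSet p.1}.encard :=
        Set.encard_union_le _ _
      _ ≤ (B : ℕ∞) + Δ * V'.ncard :=
        add_le_add (le_trans (Set.encard_image_le _ _) hesc)
          (edges_from_finite_le G Δ hΔ V' hV')
      _ = _ := by push_cast; ring
  have hmain := hL (B + Δ * V'.ncard) W' hW'fin hcard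
  calc W.ncard = Wv.ncard := (Set.ncard_image_of_injective W Subtype.val_injective).symm
    _ ≤ W'.ncard := Set.ncard_le_ncard Set.subset_union_left hW'fin
    _ ≤ _ := hmain
end

section
/- Every finite subgraph of the infinite grid with p vertices (p ≥ 1) has at least 2·⌈2·√p⌉ escaping edges, i.e., at least 2·⌈2·√p⌉ edges of the grid join the subgraph's vertex set to its complement. -/
/-- The infinite grid graph on ℤ × ℤ: two points are adjacent iff their ℓ¹-distance is 1. -/
def grid : SimpleGraph (ℤ × ℤ) where
  Adj p q := (p.1 - q.1).natAbs + (p.2 - q.2).natAbs = 1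
  symm := by
    constructor
    intro p q h
    try simp only at h ⊢
    omega
  loopless := by
    constructor
    intro p h
    simp at h

/-- The edge boundary of a vertex set `W` in a graph `G`: ordered pairs `(a, b)` with
`a ∈ W`, `b ∉ W` and `a` adjacent to `b` (in one-to-one correspondence with boundary
edges). -/
def edgeBoundary {V : Type*} (G : SimpleGraph V) (W : Set V) : Set (V × V) :=
  {p | p.1 ∈ W ∧ p.2 ∉ W ∧ G.Adj p.1 p.2}

/-- AM–GM step: if `p ≤ a * b` for naturals, then `⌈2√p⌉ ≤ a + b`. -/
lemma ceil_two_sqrt_le (p a b : ℕ) (h : p ≤ a * b) :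
    ⌈2 * Real.sqrt (p : ℝ)⌉₊ ≤ a + b := by
  rw [Nat.ceil_le]
  have h1 : Real.sqrt (p : ℝ) ≤ Real.sqrt ((a : ℝ) * b) := by
    apply Real.sqrt_le_sqrt
    exact_mod_cast h
  have h2 : Real.sqrt ((a : ℝ) * b) = Real.sqrt a * Real.sqrt b :=
    Real.sqrt_mul (by positivity) _
  have ha := Real.sq_sqrt (show (0:ℝ) ≤ a by positivity)
  have hb := Real.sq_sqrt (show (0:ℝ) ≤ b by positivity)
  have h3 := sq_nonneg (Real.sqrt a - Real.sqrt b)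
  push_cast
  nlinarith [Real.sqrt_nonneg (a:ℝ), Real.sqrt_nonneg (b:ℝ)]

/-- Harary–Harborth isoperimetric inequality: any finite nonempty set of `p` vertices of
the infinite grid has at least `2 * ⌈2 * √p⌉` boundary (escaping) edges. -/
theorem grid_isoperimetric (W : Set (ℤ × ℤ)) (hW : W.Finite) (hne : W.Nonempty) :
    ((2 * ⌈2 * Real.sqrt (W.ncard : ℝ)⌉₊ : ℕ) : ℕ∞) ≤ (edgeBoundary grid W).encard := by
  classical
  set F := hW.toFinset with hF
  have hFW : ∀ p : ℤ × ℤ, p ∈ F ↔ p ∈ W := fun p => hW.mem_toFinset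
  set A := F.image Prod.fst with hA
  set B := F.image Prod.snd with hB
  -- extremal points in each column
  have htop : ∀ x ∈ A, ∃ y, (x, y) ∈ F ∧ ∀ z, (x, z) ∈ F → z ≤ y := by
    intro x hx
    obtain ⟨q, hq, hqx⟩ := Finset.mem_image.mp hx
    obtain ⟨m, hm, hmax⟩ := (F.filter (fun p => p.1 = x)).exists_max_image Prod.snd
      ⟨q, Finset.mem_filter.mpr ⟨hq, hqx⟩⟩
    obtain ⟨hmF, hmx⟩ := Finset.mem_filter.mp hm
    refine ⟨m.2, by rwa [← hmx], fun z hz => hmax (x, z) (Finset.mem_filter.mpr ⟨hz, rfl⟩)⟩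
  have hbot : ∀ x ∈ A, ∃ y, (x, y) ∈ F ∧ ∀ z, (x, z) ∈ F → y ≤ z := by
    intro x hx
    obtain ⟨q, hq, hqx⟩ := Finset.mem_image.mp hx
    obtain ⟨m, hm, hmin⟩ := (F.filter (fun p => p.1 = x)).exists_min_image Prod.snd
      ⟨q, Finset.mem_filter.mpr ⟨hq, hqx⟩⟩
    obtain ⟨hmF, hmx⟩ := Finset.mem_filter.mp hm
    refine ⟨m.2, by rwa [← hmx], fun z hz => hmin (x, z) (Finset.mem_filter.mpr ⟨hz, rfl⟩)⟩
  have hrt : ∀ y ∈ B, ∃ x, (x, y) ∈ F ∧ ∀ z, (z, y) ∈ F → z ≤ x := by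
    intro y hy
    obtain ⟨q, hq, hqy⟩ := Finset.mem_image.mp hy
    obtain ⟨m, hm, hmax⟩ := (F.filter (fun p => p.2 = y)).exists_max_image Prod.fst
      ⟨q, Finset.mem_filter.mpr ⟨hq, hqy⟩⟩
    obtain ⟨hmF, hmy⟩ := Finset.mem_filter.mp hm
    refine ⟨m.1, by rwa [← hmy], fun z hz => hmax (z, y) (Finset.mem_filter.mpr ⟨hz, rfl⟩)⟩
  have hlf : ∀ y ∈ B, ∃ x, (x, y) ∈ F ∧ ∀ z, (z, y) ∈ F → x ≤ z := by
    intro y hy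
    obtain ⟨q, hq, hqy⟩ := Finset.mem_image.mp hy
    obtain ⟨m, hm, hmin⟩ := (F.filter (fun p => p.2 = y)).exists_min_image Prod.fst
      ⟨q, Finset.mem_filter.mpr ⟨hq, hqy⟩⟩
    obtain ⟨hmF, hmy⟩ := Finset.mem_filter.mp hm
    refine ⟨m.1, by rwa [← hmy], fun z hz => hmin (z, y) (Finset.mem_filter.mpr ⟨hz, rfl⟩)⟩
  choose! t ht1 ht2 using htop
  choose! b hb1 hb2 using hbot
  choose! r hr1 hr2 using hrt
  choose! l hl1 hl2 using hlf
  -- four families of boundary edges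
  set U := A.image (fun x => ((x, t x), (x, t x + 1))) with hU
  set D := A.image (fun x => ((x, b x), (x, b x - 1))) with hD
  set R := B.image (fun y => ((r y, y), (r y + 1, y))) with hR
  set L := B.image (fun y => ((l y, y), (l y - 1, y))) with hL
  set S := U ∪ D ∪ R ∪ L with hS
  -- S is contained in the edge boundary
  have hsub : (↑S : Set ((ℤ×ℤ) × (ℤ×ℤ))) ⊆ edgeBoundary grid W := by
    intro e he
    simp only [hS, Finset.coe_union, Set.mem_union, Finset.mem_coe, hU, hD, hR, hL,
      Finset.mem_image] at he
    rcases he with ((⟨x, hx, rfl⟩ | ⟨x, hx, rfl⟩) | ⟨y, hy, rfl⟩) | ⟨y, hy, rfl⟩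
    · refine ⟨(hFW _).mp (ht1 x hx), fun hc => ?_, by simp [grid]⟩
      have := ht2 x hx _ ((hFW _).mpr hc); omega
    · refine ⟨(hFW _).mp (hb1 x hx), fun hc => ?_, by simp [grid]⟩
      have := hb2 x hx _ ((hFW _).mpr hc); omega
    · refine ⟨(hFW _).mp (hr1 y hy), fun hc => ?_, by simp [grid]⟩
      have := hr2 y hy _ ((hFW _).mpr hc); omega
    · refine ⟨(hFW _).mp (hl1 y hy), fun hc => ?_, by simp [grid]⟩
      have := hl2 y hy _ ((hFW _).mpr hc); omega
  -- cardinality counts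
  have hUcard : U.card = A.card := Finset.card_image_of_injective _
    (fun a a' h => by simpa using congrArg (fun p => p.1.1) h)
  have hDcard : D.card = A.card := Finset.card_image_of_injective _
    (fun a a' h => by simpa using congrArg (fun p => p.1.1) h)
  have hRcard : R.card = B.card := Finset.card_image_of_injective _
    (fun a a' h => by simpa using congrArg (fun p => p.1.2) h)
  have hLcard : L.card = B.card := Finset.card_image_of_injective _
    (fun a a' h => by simpa using congrArg (fun p => p.1.2) h)
  -- disjointness
  have dUD : Disjoint U D := by
    rw [Finset.disjoint_left]
    rintro e heU heD
    obtain ⟨x, hx, rfl⟩ := Finset.mem_image.mp heU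
    obtain ⟨x', hx', he⟩ := Finset.mem_image.mp heD
    have h1 := congrArg (fun p => p.1.2) he
    have h2 := congrArg (fun p => p.2.2) he
    simp at h1 h2; omega
  have dUR : ∀ e ∈ U, e.2.1 = e.1.1 := by
    rintro e he; obtain ⟨x, hx, rfl⟩ := Finset.mem_image.mp he; rfl
  have dDR : ∀ e ∈ D, e.2.1 = e.1.1 := by
    rintro e he; obtain ⟨x, hx, rfl⟩ := Finset.mem_image.mp he; rfl
  have dRne : ∀ e ∈ R, e.2.1 = e.1.1 + 1 := by
    rintro e he; obtain ⟨y, hy, rfl⟩ := Finset.mem_image.mp he; rfl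
  have dLne : ∀ e ∈ L, e.2.1 = e.1.1 - 1 := by
    rintro e he; obtain ⟨y, hy, rfl⟩ := Finset.mem_image.mp he; rfl
  have dUDR : Disjoint (U ∪ D) R := by
    rw [Finset.disjoint_left]
    rintro e he heR
    have hr := dRne e heR
    rcases Finset.mem_union.mp he with h | h
    · have := dUR e h; omega
    · have := dDR e h; omega
  have dUDRL : Disjoint (U ∪ D ∪ R) L := by
    rw [Finset.disjoint_left]
    rintro e he heL
    have hl := dLne e heL
    rcases Finset.mem_union.mp he with h | h
    · rcases Finset.mem_union.mp h with h' | h'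
      · have := dUR e h'; omega
      · have := dDR e h'; omega
    · have := dRne e h; omega
  have hScard : S.card = 2 * (A.card + B.card) := by
    rw [hS, Finset.card_union_of_disjoint dUDRL, Finset.card_union_of_disjoint dUDR,
      Finset.card_union_of_disjoint dUD, hUcard, hDcard, hRcard, hLcard]
    ring
  -- p ≤ A.card * B.card
  have hpF : W.ncard = F.card := Set.ncard_eq_toFinset_card W hW
  have hple : F.card ≤ A.card * B.card := by
    have hsub2 : F ⊆ A ×ˢ B := by
      intro p hp
      exact Finset.mem_product.mpr ⟨Finset.mem_image_of_mem _ hp, Finset.mem_image_of_mem _ hp⟩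
    calc F.card ≤ (A ×ˢ B).card := Finset.card_le_card hsub2
      _ = A.card * B.card := Finset.card_product A B
  have hceil : ⌈2 * Real.sqrt (W.ncard : ℝ)⌉₊ ≤ A.card + B.card := by
    rw [hpF]
    exact ceil_two_sqrt_le _ _ _ hple
  -- conclude
  calc ((2 * ⌈2 * Real.sqrt (W.ncard : ℝ)⌉₊ : ℕ) : ℕ∞)
      ≤ ((2 * (A.card + B.card) : ℕ) : ℕ∞) := by
        exact_mod_cast Nat.mul_le_mul_left 2 hceil
    _ = ((S.card : ℕ) : ℕ∞) := by rw [hScard]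
    _ = (↑S : Set ((ℤ×ℤ) × (ℤ×ℤ))).encard := (Set.encard_coe_eq_coe_finsetCard S).symm
    _ ≤ (edgeBoundary grid W).encard := Set.encard_le_encard hsub
end

section
/- Let G = (V,E) be a connected graph in which every ray contains a vertex of infinite degree, let Ṽ be a finite set of vertices, and let H be a finite set of edges such that in G − H no vertex of Ṽ is connected by a path to any vertex of infinite degree. Then every connected component of G − H meeting Ṽ is finite. -/
/-- A ray in a graph: an injective sequence of vertices with consecutive vertices adjacent. -/
def IsRay {V : Type*} (G : SimpleGraph V) (x : ℕ → V) : Prop :=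
  Function.Injective x ∧ ∀ i : ℕ, G.Adj (x i) (x (i + 1))

lemma edist_getVert_le' {V : Type*} {G : SimpleGraph V} {u w : V} (p : G.Walk u w) (i : ℕ) :
    G.edist u (p.getVert i) ≤ i := by
  induction p generalizing i with
  | nil =>
    rw [SimpleGraph.Walk.getVert_of_length_le _ (by simp)]
    simp
  | @cons a b c h q ih =>
    cases i with
    | zero => simp [SimpleGraph.Walk.getVert_zero]
    | succ n =>
      have h1 : G.edist a b = 1 := SimpleGraph.edist_eq_one_iff_adj.mpr h
      calc G.edist a ((SimpleGraph.Walk.cons h q).getVert (n+1))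
          = G.edist a (q.getVert n) := rfl
        _ ≤ G.edist a b + G.edist b (q.getVert n) := SimpleGraph.edist_triangle
        _ ≤ 1 + (n : ℕ∞) := add_le_add h1.le (ih n)
        _ = ((n+1 : ℕ) : ℕ∞) := by push_cast; ring

lemma edist_getVert_right' {V : Type*} {G : SimpleGraph V} {u w : V} (p : G.Walk u w) (i : ℕ) :
    G.edist (p.getVert i) w ≤ ((p.length - i : ℕ) : ℕ∞) := by
  induction p generalizing i with
  | nil =>
    rw [SimpleGraph.Walk.getVert_of_length_le _ (by simp)]
    simp
  | @cons a b c h q ih =>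
    cases i with
    | zero =>
      simpa using (SimpleGraph.edist_le (SimpleGraph.Walk.cons h q))
    | succ n =>
      simpa using ih n

lemma edist_getVert_eq' {V : Type*} {G : SimpleGraph V} {v y : V} {n : ℕ} (p : G.Walk v y)
    (hp : p.length = n) (he : G.edist v y = (n : ℕ∞)) {i : ℕ} (hi : i ≤ n) :
    G.edist v (p.getVert i) = (i : ℕ∞) := by
  have h1 := edist_getVert_le' p i
  have h2 := edist_getVert_right' p i
  rw [hp] at h2
  have htri : (n : ℕ∞) ≤ G.edist v (p.getVert i) + ((n - i : ℕ) : ℕ∞) := by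
    rw [← he]
    exact le_trans SimpleGraph.edist_triangle (add_le_add (le_refl _) h2)
  have hne : G.edist v (p.getVert i) ≠ ⊤ := ne_top_of_le_ne_top (by simp) h1
  lift G.edist v (p.getVert i) to ℕ using hne with k hk
  have h1' : k ≤ i := by exact_mod_cast h1
  have htri' : n ≤ k + (n - i) := by exact_mod_cast htri
  have : k = i := by omega
  exact_mod_cast this

/-- Let `G` be a connected graph in which every ray contains a vertex of infinite degree,
`Vt` a finite vertex set, and `H` a finite set of edges such that in `G − H` no vertex of
`Vt` is connected by a path to any vertex of infinite degree. Then every connected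
component of `G − H` meeting `Vt` is finite. -/
theorem component_finite_of_ray_infiniteDegree {V : Type*} (G : SimpleGraph V)
    (hconn : G.Connected)
    (hray : ∀ x : ℕ → V, IsRay G x → ∃ i : ℕ, (G.neighborSet (x i)).Infinite)
    (Vt : Set V) (hVt : Vt.Finite) (H : Set (Sym2 V)) (hH : H.Finite)
    (hsep : ∀ v ∈ Vt, ∀ y : V, (G.deleteEdges H).Reachable v y →
      ¬ (G.neighborSet y).Infinite) :
    ∀ v ∈ Vt, {y : V | (G.deleteEdges H).Reachable v y}.Finite := by
  intro v hv
  set G' : SimpleGraph V := G.deleteEdges H with hG'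
  by_contra hinf
  replace hinf : {y : V | G'.Reachable v y}.Infinite := hinf
  -- every vertex in the component has finite neighborhood in G'
  have nbr : ∀ y : V, G'.Reachable v y → (G'.neighborSet y).Finite := by
    intro y hy
    refine (Set.not_infinite.mp (hsep v hv y hy)).subset ?_
    intro z hz
    exact (SimpleGraph.deleteEdges_adj.mp hz).1
  have reach_of_edist : ∀ {y : V} {n : ℕ}, G'.edist v y = (n : ℕ∞) → G'.Reachable v y := by
    intro y n h
    exact SimpleGraph.reachable_of_edist_ne_top (by rw [h]; simp)
  -- spheres are finite
  have Sfin : ∀ n : ℕ, {y : V | G'.edist v y = (n : ℕ∞)}.Finite := by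
    intro n
    induction n with
    | zero =>
      refine (Set.finite_singleton v).subset ?_
      intro y hy
      simp only [Set.mem_setOf_eq, Nat.cast_zero, SimpleGraph.edist_eq_zero_iff] at hy
      simp [hy]
    | succ n ih =>
      have hsub : {y : V | G'.edist v y = ((n+1 : ℕ) : ℕ∞)} ⊆
          ⋃ u ∈ {y : V | G'.edist v y = (n : ℕ∞)}, G'.neighborSet u := by
        intro y hy
        simp only [Set.mem_setOf_eq] at hy
        obtain ⟨p, hp⟩ := SimpleGraph.exists_walk_of_edist_eq_coe hy
        have hu : G'.edist v (p.getVert n) = (n : ℕ∞) :=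
          edist_getVert_eq' p hp hy (Nat.le_succ n)
        have hadj : G'.Adj (p.getVert n) y := by
          have := p.adj_getVert_succ (by omega : n < p.length)
          rwa [show p.getVert (n+1) = y by rw [← hp]; exact p.getVert_length] at this
        exact Set.mem_biUnion hu hadj
      exact ((ih.biUnion (fun u hu => nbr u (reach_of_edist hu)))).subset hsub
  -- each sphere is nonempty
  have hex : ∀ n : ℕ, ∃ y : V, G'.edist v y = (n : ℕ∞) := by
    intro n
    have hball : ({y : V | G'.Reachable v y} \
        ⋃ k ∈ Finset.range (n+1), {y : V | G'.edist v y = (k : ℕ∞)}).Infinite := by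
      refine hinf.diff ?_
      exact Set.Finite.biUnion (Finset.range (n+1)).finite_toSet (fun k _ => Sfin k)
    obtain ⟨y, hy⟩ := hball.nonempty
    obtain ⟨hyr, hyb⟩ := hy
    have hne : G'.edist v y ≠ ⊤ := SimpleGraph.edist_ne_top_iff_reachable.mpr hyr
    lift G'.edist v y to ℕ using hne with m hm
    have hmn : n ≤ m := by
      by_contra hlt
      exact hyb (Set.mem_biUnion (Finset.mem_range.mpr (by omega))
        (show G'.edist v y = (m : ℕ∞) from hm.symm))
    obtain ⟨p, hp⟩ := SimpleGraph.exists_walk_of_edist_eq_coe hm.symm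
    exact ⟨p.getVert n, edist_getVert_eq' p hp hm.symm hmn⟩
  -- the inverse system of geodesic sequences
  let α : ℕ → Type _ := fun n => {x : ℕ → V //
    (∀ i < n, G'.Adj (x i) (x (i+1))) ∧ (∀ i ≤ n, G'.edist v (x i) = (i : ℕ∞)) ∧
    ∀ i, n ≤ i → x i = x n}
  have hNE : ∀ n, Nonempty (α n) := by
    intro n
    obtain ⟨y, hy⟩ := hex n
    obtain ⟨p, hp⟩ := SimpleGraph.exists_walk_of_edist_eq_coe hy
    refine ⟨fun k => p.getVert (min k n), ?_, ?_, ?_⟩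
    · intro i hi
      have h1 : min i n = i := by omega
      have h2 : min (i+1) n = i + 1 := by omega
      beta_reduce
      rw [h1, h2]
      exact p.adj_getVert_succ (by omega)
    · intro i hi
      beta_reduce
      rw [min_eq_left hi]
      exact edist_getVert_eq' p hp hy hi
    · intro i hi
      beta_reduce
      rw [min_eq_right hi, min_self]
  haveI : ∀ n, Nonempty (α n) := hNE
  haveI : Subsingleton (α 0) := by
    constructor
    rintro ⟨x, hx1, hx2, hx3⟩ ⟨y, hy1, hy2, hy3⟩
    have hx0 : x 0 = v := by
      have := hx2 0 le_rfl
      simp only [Nat.cast_zero, SimpleGraph.edist_eq_zero_iff] at this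
      exact this.symm
    have hy0 : y 0 = v := by
      have := hy2 0 le_rfl
      simp only [Nat.cast_zero, SimpleGraph.edist_eq_zero_iff] at this
      exact this.symm
    apply Subtype.ext
    funext i
    show x i = y i
    rw [hx3 i (Nat.zero_le i), hy3 i (Nat.zero_le i), hx0, hy0]
  haveI : Finite (α 0) := Finite.of_subsingleton
  -- projections
  let π : {i j : ℕ} → (hij : i ≤ j) → α j → α i := fun {i j} hij x =>
    ⟨fun k => x.1 (min k i), by
      obtain ⟨h1, h2, h3⟩ := x.2
      refine ⟨?_, ?_, ?_⟩
      · intro l hl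
        have e1 : min l i = l := by omega
        have e2 : min (l+1) i = l + 1 := by omega
        beta_reduce
        rw [e1, e2]
        exact h1 l (by omega)
      · intro l hl
        beta_reduce
        rw [min_eq_left hl]
        exact h2 l (le_trans hl hij)
      · intro l hl
        beta_reduce
        rw [min_eq_right hl, min_self]⟩
  have π_refl : ∀ ⦃i⦄ (a : α i), π rfl.le a = a := by
    intro i a
    apply Subtype.ext
    funext k
    by_cases hk : k ≤ i
    · simp [π, min_eq_left hk]
    · have : min k i = i := by omega
      simp only [π, this]
      exact (a.2.2.2 k (by omega)).symm
  have π_trans : ∀ ⦃i j k⦄ (hij : i ≤ j) (hjk : j ≤ k) (a : α k),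
      π hij (π hjk a) = π (hij.trans hjk) a := by
    intro i j k hij hjk a
    apply Subtype.ext
    funext l
    have : min (min l i) j = min l i := by omega
    simp only [π, this]
  have hfib : ∀ (i : ℕ) (a : α i),
      {b : α (i+1) | π (Nat.le_add_right i 1) b = a}.Finite := by
    intro i a
    have hreach : G'.Reachable v (a.1 i) := reach_of_edist (a.2.2.1 i le_rfl)
    apply Set.Finite.of_finite_image (f := fun b : α (i+1) => b.1 (i+1))
    · refine ((nbr (a.1 i) hreach).subset ?_)
      rintro z ⟨b, hb, rfl⟩
      simp only [Set.mem_setOf_eq] at hb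
      have hbi : b.1 i = a.1 i := by
        have := congrArg (fun c => c.1 i) hb
        simpa [π, min_self] using this
      have := b.2.1 i (by omega)
      rw [hbi] at this
      exact this
    · rintro b hb c hc hbc
      simp only [Set.mem_setOf_eq] at hb hc
      apply Subtype.ext
      funext k
      by_cases hk : k ≤ i
      · have hbk : b.1 k = a.1 k := by
          have := congrArg (fun c => c.1 k) hb
          simpa [π, min_eq_left hk] using this
        have hck : c.1 k = a.1 k := by
          have := congrArg (fun c => c.1 k) hc
          simpa [π, min_eq_left hk] using this
        rw [hbk, hck]
      · have hbk := b.2.2.2 k (by omega)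
        have hck := c.2.2.2 k (by omega)
        rw [hbk, hck]
        exact hbc
  obtain ⟨f, hf⟩ := exists_seq_forall_proj_of_forall_finite π π_refl π_trans hfib
  -- the ray
  let r : ℕ → V := fun n => (f n).1 n
  have hcompat : ∀ {n m : ℕ}, n ≤ m → (f m).1 n = r n := by
    intro n m hnm
    have := congrArg (fun c => c.1 n) (hf hnm)
    simpa [π, min_self] using this
  have hedist : ∀ n, G'.edist v (r n) = (n : ℕ∞) := fun n => (f n).2.2.1 n le_rfl
  have hray' : IsRay G r := by
    constructor
    · intro a b hab
      have : ((a : ℕ) : ℕ∞) = (b : ℕ) := by rw [← hedist a, ← hedist b, hab]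
      exact_mod_cast this
    · intro n
      have hadj : G'.Adj ((f (n+1)).1 n) ((f (n+1)).1 (n+1)) :=
        (f (n+1)).2.1 n (by omega)
      rw [hcompat (Nat.le_succ n)] at hadj
      exact (SimpleGraph.deleteEdges_adj.mp hadj).1
  obtain ⟨i, hi⟩ := hray r hray'
  exact hsep v hv (r i) (reach_of_edist (hedist i)) hi
end
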